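/- Let K be a field with a valuation v taking values in ℤ ∪ {∞} (say K = ℚ_p with the p-adic valuation), and let A ⊆ K be a finite nonempty set. Then there are at most |A| − 1 distinct closed balls of the form B_{v(a−b)}(a) = {x : v(x−a) ≥ v(a−b)} with a, b ∈ A, a ≠ b. -/

import Mathlib

open IsUltrametricDist Metric

/-- A laminar family of subsets of `A`, each of size ≥ 2, has at most `|A| - 1` members. -/
lemma laminar_bound {α : Type*} [DecidableEq α] (A : Finset α) :
    ∀ (F : Finset (Finset α)), (∀ T ∈ F, T ⊆ A) → (∀ T ∈ F, 2 ≤ T.card) →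
    (∀ T₁ ∈ F, ∀ T₂ ∈ F, T₁ ⊆ T₂ ∨ T₂ ⊆ T₁ ∨ Disjoint T₁ T₂) →
    F.card ≤ A.card - 1 := by
  induction A using Finset.strongInduction with
  | _ A ih =>
    intro F hsub hcard hlam
    rcases F.eq_empty_or_nonempty with rfl | hFne
    · simp
    obtain ⟨M, hM, hMmin⟩ := F.exists_minimal hFne
    obtain ⟨x, hx, y, hy, hxy⟩ := Finset.one_lt_card.mp (hcard M hM)
    -- any T ∈ F containing y contains M
    have key : ∀ T ∈ F, T ≠ M → y ∈ T → M ⊆ T := by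
      intro T hT hTM hyT
      rcases hlam T hT M hM with h | h | h
      · exact absurd (le_antisymm h (hMmin hT h)) hTM
      · exact h
      · exact absurd hy (Finset.disjoint_left.mp h hyT)
    have hyA : y ∈ A := hsub M hM hy
    set A' := A.erase y with hA'
    set F' := (F.erase M).image (fun T => T.erase y) with hF'
    have keyM : ∀ T ∈ F, T ≠ M → x ∈ T → M ⊆ T := by
      intro T hT hTM hxT
      rcases hlam T hT M hM with h | h | h
      · exact absurd (le_antisymm h (hMmin hT h)) hTM
      · exact h
      · exact absurd hx (Finset.disjoint_left.mp h hxT)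
    have hinj : Set.InjOn (fun T => T.erase y) (F.erase M : Set (Finset α)) := by
      intro T₁ hT₁ T₂ hT₂ h
      have h' : T₁.erase y = T₂.erase y := h
      simp only [Finset.coe_erase, Set.mem_diff, Finset.mem_coe, Set.mem_singleton_iff] at hT₁ hT₂
      by_cases h₁ : y ∈ T₁ <;> by_cases h₂ : y ∈ T₂
      · have := congrArg (insert y) h'
        rwa [Finset.insert_erase h₁, Finset.insert_erase h₂] at this
      · exfalso
        have hM₁ := key T₁ hT₁.1 hT₁.2 h₁
        have hxT₂ : x ∈ T₂ := by
          have hx' : x ∈ T₁.erase y := Finset.mem_erase.mpr ⟨hxy, hM₁ hx⟩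
          rw [h'] at hx'; exact Finset.mem_of_mem_erase hx'
        exact h₂ (keyM T₂ hT₂.1 hT₂.2 hxT₂ hy)
      · exfalso
        have hM₂ := key T₂ hT₂.1 hT₂.2 h₂
        have hxT₁ : x ∈ T₁ := by
          have hx' : x ∈ T₂.erase y := Finset.mem_erase.mpr ⟨hxy, hM₂ hx⟩
          rw [← h'] at hx'; exact Finset.mem_of_mem_erase hx'
        exact h₁ (keyM T₁ hT₁.1 hT₁.2 hxT₁ hy)
      · rwa [Finset.erase_eq_of_notMem h₁, Finset.erase_eq_of_notMem h₂] at h'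
    have hF'card : F'.card = (F.erase M).card := Finset.card_image_of_injOn hinj
    have hA'ss : A' ⊂ A := Finset.erase_ssubset hyA
    have hF'bound : F'.card ≤ A'.card - 1 := by
      apply ih A' hA'ss F'
      · intro T hT
        obtain ⟨T₀, hT₀, rfl⟩ := Finset.mem_image.mp hT
        exact Finset.erase_subset_erase y (hsub T₀ (Finset.mem_of_mem_erase hT₀))
      · intro T hT
        obtain ⟨T₀, hT₀, rfl⟩ := Finset.mem_image.mp hT
        by_cases hyT : y ∈ T₀
        · have hMT : M ⊆ T₀ := key T₀ (Finset.mem_of_mem_erase hT₀) (Finset.ne_of_mem_erase hT₀) hyT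
          have h3 : 3 ≤ T₀.card := by
            have := Finset.card_lt_card (lt_of_le_of_ne hMT (Finset.ne_of_mem_erase hT₀).symm)
            have := hcard M hM
            omega
          rw [Finset.card_erase_of_mem hyT]; omega
        · rw [Finset.erase_eq_of_notMem hyT]
          exact hcard T₀ (Finset.mem_of_mem_erase hT₀)
      · intro T₁ hT₁ T₂ hT₂
        obtain ⟨S₁, hS₁, rfl⟩ := Finset.mem_image.mp hT₁
        obtain ⟨S₂, hS₂, rfl⟩ := Finset.mem_image.mp hT₂
        rcases hlam S₁ (Finset.mem_of_mem_erase hS₁) S₂ (Finset.mem_of_mem_erase hS₂) with h | h | h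
        · exact Or.inl (Finset.erase_subset_erase y h)
        · exact Or.inr (Or.inl (Finset.erase_subset_erase y h))
        · exact Or.inr (Or.inr (h.mono (Finset.erase_subset y S₁) (Finset.erase_subset y S₂)))
    have hAcard : 2 ≤ A.card := le_trans (hcard M hM) (Finset.card_le_card (hsub M hM))
    have hA'c : A'.card = A.card - 1 := Finset.card_erase_of_mem hyA
    have : (F.erase M).card = F.card - 1 := Finset.card_erase_of_mem hM
    have hFpos : 1 ≤ F.card := Finset.card_pos.mpr hFne
    omega

theorem stmt13 {p : ℕ} [Fact p.Prime] (A : Finset ℚ_[p]) (hA : A.Nonempty) :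
    Set.ncard {B : Set ℚ_[p] | ∃ a ∈ A, ∃ b ∈ A, a ≠ b ∧
        B = Metric.closedBall a ‖a - b‖} ≤ A.card - 1 := by
  classical
  set g : ℚ_[p] × ℚ_[p] → Set ℚ_[p] := fun ab => Metric.closedBall ab.1 ‖ab.1 - ab.2‖ with hg
  set P : Finset (ℚ_[p] × ℚ_[p]) := (A ×ˢ A).filter (fun ab => ab.1 ≠ ab.2) with hP
  have hSeq : {B : Set ℚ_[p] | ∃ a ∈ A, ∃ b ∈ A, a ≠ b ∧
      B = Metric.closedBall a ‖a - b‖} = ↑(P.image g) := by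
    ext B
    simp only [Set.mem_setOf_eq, Finset.coe_image, Set.mem_image, Finset.mem_coe,
      Finset.mem_filter, Finset.mem_product, hP, hg]
    constructor
    · rintro ⟨a, ha, b, hb, hab, rfl⟩
      exact ⟨(a, b), ⟨⟨ha, hb⟩, hab⟩, rfl⟩
    · rintro ⟨⟨a, b⟩, ⟨⟨ha, hb⟩, hab⟩, rfl⟩
      exact ⟨a, ha, b, hb, hab, rfl⟩
  rw [hSeq, Set.ncard_coe_finset]
  -- each ball contains its defining pair
  have hmemg : ∀ ab ∈ P, ab.1 ∈ g ab ∧ ab.2 ∈ g ab := by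
    rintro ⟨a, b⟩ _
    constructor
    · simp [hg, Metric.mem_closedBall]
    · simp [hg, Metric.mem_closedBall, dist_eq_norm]
      rw [show b - a = -(a - b) by ring, norm_neg]
  -- nesting: if a,b ∈ closedBall c r then closedBall a ‖a-b‖ ⊆ closedBall c r
  have hnest : ∀ (a b c : ℚ_[p]) (r : ℝ), a ∈ Metric.closedBall c r → b ∈ Metric.closedBall c r →
      Metric.closedBall a ‖a - b‖ ⊆ Metric.closedBall c r := by
    intro a b c r hac hbc
    have hab : ‖a - b‖ ≤ r := by
      rw [← dist_eq_norm]
      calc dist a b ≤ max (dist a c) (dist c b) := _root_.dist_triangle_max a c b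
      _ ≤ r := max_le (Metric.mem_closedBall.mp hac) (by rw [dist_comm]; exact Metric.mem_closedBall.mp hbc)
    exact (Metric.closedBall_subset_closedBall hab).trans
      (by rw [closedBall_eq_of_mem hac])
  -- the trace map
  set f : Set ℚ_[p] → Finset ℚ_[p] := fun B => A.filter (· ∈ B) with hf
  have htrace : ∀ B ∈ P.image g, ∀ ab ∈ P, B = g ab → ab.1 ∈ f B ∧ ab.2 ∈ f B := by
    rintro B _ ⟨a, b⟩ hab rfl
    obtain ⟨h1, h2⟩ := hmemg (a, b) hab
    simp only [hP, Finset.mem_filter, Finset.mem_product] at hab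
    exact ⟨Finset.mem_filter.mpr ⟨hab.1.1, h1⟩, Finset.mem_filter.mpr ⟨hab.1.2, h2⟩⟩
  have hfinj : Set.InjOn f (P.image g : Set (Set ℚ_[p])) := by
    intro B₁ hB₁ B₂ hB₂ hfeq
    simp only [Finset.coe_image, Set.mem_image, Finset.mem_coe] at hB₁ hB₂
    obtain ⟨⟨a, b⟩, hab, rfl⟩ := hB₁
    obtain ⟨⟨a', b'⟩, hab', rfl⟩ := hB₂
    have h1 := hmemg (a, b) hab
    have h2 := hmemg (a', b') hab'
    simp only [hP, Finset.mem_filter, Finset.mem_product] at hab hab'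
    -- a', b' ∈ f (g (a,b)) so in g (a,b)
    have ha' : a' ∈ g (a, b) := by
      have : a' ∈ f (g (a', b')) := Finset.mem_filter.mpr ⟨hab'.1.1, h2.1⟩
      rw [← hfeq] at this
      exact (Finset.mem_filter.mp this).2
    have hb' : b' ∈ g (a, b) := by
      have : b' ∈ f (g (a', b')) := Finset.mem_filter.mpr ⟨hab'.1.2, h2.2⟩
      rw [← hfeq] at this
      exact (Finset.mem_filter.mp this).2
    have ha : a ∈ g (a', b') := by
      have : a ∈ f (g (a, b)) := Finset.mem_filter.mpr ⟨hab.1.1, h1.1⟩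
      rw [hfeq] at this
      exact (Finset.mem_filter.mp this).2
    have hb : b ∈ g (a', b') := by
      have : b ∈ f (g (a, b)) := Finset.mem_filter.mpr ⟨hab.1.2, h1.2⟩
      rw [hfeq] at this
      exact (Finset.mem_filter.mp this).2
    exact le_antisymm (hnest a b a' ‖a' - b'‖ ha hb) (hnest a' b' a ‖a - b‖ ha' hb')
  set F : Finset (Finset ℚ_[p]) := (P.image g).image f with hF
  have hcard1 : (P.image g).card = F.card := (Finset.card_image_of_injOn hfinj).symm
  rw [hcard1]
  apply laminar_bound A F
  · intro T hT
    obtain ⟨B, _, rfl⟩ := Finset.mem_image.mp hT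
    exact Finset.filter_subset _ _
  · intro T hT
    obtain ⟨B, hB, rfl⟩ := Finset.mem_image.mp hT
    obtain ⟨⟨a, b⟩, hab, rfl⟩ := Finset.mem_image.mp hB
    have := htrace (g (a, b)) (Finset.mem_image_of_mem g hab) (a, b) hab rfl
    have hne : a ≠ b := (Finset.mem_filter.mp hab).2
    exact Finset.one_lt_card.mpr ⟨a, this.1, b, this.2, hne⟩
  · intro T₁ hT₁ T₂ hT₂
    obtain ⟨B₁, hB₁, rfl⟩ := Finset.mem_image.mp hT₁
    obtain ⟨B₂, hB₂, rfl⟩ := Finset.mem_image.mp hT₂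
    obtain ⟨⟨a, b⟩, hab, rfl⟩ := Finset.mem_image.mp hB₁
    obtain ⟨⟨a', b'⟩, hab', rfl⟩ := Finset.mem_image.mp hB₂
    rcases closedBall_subset_trichotomy a a' ‖a - b‖ ‖a' - b'‖ with h | h | h
    · exact Or.inl (Finset.monotone_filter_right A (fun x _ hx => h hx))
    · exact Or.inr (Or.inl (Finset.monotone_filter_right A (fun x _ hx => h hx)))
    · refine Or.inr (Or.inr (Finset.disjoint_left.mpr ?_))
      intro z hz₁ hz₂
      exact Set.disjoint_left.mp h (Finset.mem_filter.mp hz₁).2 (Finset.mem_filter.mp hz₂).2
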